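/- For rooted binary plane trees, the ratio of the number B_n^{(k)} of binary trees with n nodes and distance to the border at least k, to the total number B_n of binary trees with n nodes, tends to 2^{k − 2^k + 1} as n → ∞ through odd integers. More precisely, with n = 2m+1, B_n^{(k)}/B_n = [(2^k/(2m−2^k+2))·binom(2m−2^k+2, m−2^k+1)] / C_m → 2^{k−2^k+1} as m → ∞. -/

import Mathlib

open Filter Topology Finset

lemma key (m : ℕ) : ∀ j, j + 1 ≤ m →
    (2*m+1-j).choose (m-j) * ∏ i ∈ range j, (2*m-i)
      = catalan m * ((2*m+1-j) * ∏ i ∈ range j, (m-i)) := by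
  intro j
  induction j with
  | zero =>
    intro hm
    simp only [Nat.sub_zero, range_zero, prod_empty, mul_one]
    have h1 : (2*m+1) * (2*m).choose m = (2*m+1).choose (m+1) * (m+1) :=
      Nat.add_one_mul_choose_eq (2*m) m
    have h2 : (2*m+1).choose (m+1) = (2*m+1).choose m := by
      have := Nat.choose_symm (n := 2*m+1) (k := m+1) (by omega)
      rw [show 2*m+1-(m+1) = m by omega] at this
      exact this.symm
    have h3 : (m+1) * catalan m = (2*m).choose m := succ_mul_catalan_eq_centralBinom m
    have : (2*m+1).choose m * (m+1) = catalan m * (2*m+1) * (m+1) := by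
      rw [← h2, ← h1, ← h3]; ring
    have := Nat.eq_of_mul_eq_mul_right (show 0 < m+1 by omega) this
    rw [this]
  | succ j ih =>
    intro hm
    have ihj := ih (by omega)
    have hc : (2*m-j+1) * (2*m-j).choose (m-j-1) = (2*m-j+1).choose (m-j-1+1) * (m-j-1+1) :=
      Nat.add_one_mul_choose_eq (2*m-j) (m-j-1)
    rw [show 2*m-j+1 = 2*m+1-j by omega, show m-j-1+1 = m-j by omega] at hc
    have h4 : 2*m+1-(j+1) = 2*m-j := by omega
    have h5 : m-(j+1) = m-j-1 := by omega
    rw [h4, h5, prod_range_succ, prod_range_succ]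
    apply Nat.eq_of_mul_eq_mul_left (show 0 < 2*m+1-j by omega)
    calc (2*m+1-j) * ((2*m-j).choose (m-j-1) * ((∏ i ∈ range j, (2*m-i)) * (2*m-j)))
        = ((2*m+1-j) * (2*m-j).choose (m-j-1)) * (∏ i ∈ range j, (2*m-i)) * (2*m-j) := by ring
      _ = ((2*m+1-j).choose (m-j) * (m-j)) * (∏ i ∈ range j, (2*m-i)) * (2*m-j) := by rw [hc]
      _ = ((2*m+1-j).choose (m-j) * (∏ i ∈ range j, (2*m-i))) * ((m-j) * (2*m-j)) := by ring
      _ = (catalan m * ((2*m+1-j) * ∏ i ∈ range j, (m-i))) * ((m-j) * (2*m-j)) := by rw [ihj]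
      _ = (2*m+1-j) * (catalan m * ((2*m-j) * ((∏ i ∈ range j, (m-i)) * (m-j)))) := by ring

lemma eq_event (k m : ℕ) (h : 2^k ≤ m) :
    (((2 ^ k : ℝ) / ((2 * m + 2 - 2 ^ k : ℕ) : ℝ)) *
        ((2 * m + 2 - 2 ^ k).choose (m + 1 - 2 ^ k) : ℝ)) / (catalan m : ℝ)
      = 2^k * ∏ i ∈ range (2^k - 1), (((m:ℝ) - i) / (2*(m:ℝ) - i)) := by
  have h1 : (1:ℕ) ≤ 2^k := Nat.one_le_two_pow
  have hkey := key m (2^k - 1) (by omega)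
  rw [show 2*m+1-(2^k-1) = 2*m+2-2^k by omega, show m-(2^k-1) = m+1-2^k by omega] at hkey
  have e1 : ((∏ i ∈ range (2^k-1), (2*m-i) : ℕ) : ℝ) = ∏ i ∈ range (2^k-1), (2*(m:ℝ) - i) := by
    rw [Nat.cast_prod]
    refine prod_congr rfl fun i hi => ?_
    simp only [mem_range] at hi
    rw [Nat.cast_sub (by omega)]; push_cast; ring
  have e2 : ((∏ i ∈ range (2^k-1), (m-i) : ℕ) : ℝ) = ∏ i ∈ range (2^k-1), ((m:ℝ) - i) := by
    rw [Nat.cast_prod]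
    refine prod_congr rfl fun i hi => ?_
    simp only [mem_range] at hi
    rw [Nat.cast_sub (by omega)]
  have hkeyR : ((2*m+2-2^k).choose (m+1-2^k) : ℝ) * ∏ i ∈ range (2^k-1), (2*(m:ℝ) - i)
      = (catalan m : ℝ) * (((2*m+2-2^k : ℕ) : ℝ) * ∏ i ∈ range (2^k-1), ((m:ℝ) - i)) := by
    rw [← e1, ← e2]; exact_mod_cast hkey
  have hD : ((2*m+2-2^k : ℕ) : ℝ) ≠ 0 := by
    have : (0:ℕ) < 2*m+2-2^k := by omega
    exact_mod_cast this.ne'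
  have hC : (catalan m : ℝ) ≠ 0 := by
    have hsc := succ_mul_catalan_eq_centralBinom m
    have hb := Nat.centralBinom_pos m
    have : catalan m ≠ 0 := by intro h0; rw [h0, mul_zero] at hsc; omega
    exact_mod_cast this
  have hP2 : (∏ i ∈ range (2^k-1), (2*(m:ℝ) - i)) ≠ 0 := by
    refine prod_ne_zero_iff.mpr fun i hi => ?_
    simp only [mem_range] at hi
    have : (i:ℝ) < 2*m := by exact_mod_cast (by omega : i < 2*m)
    linarith
  rw [prod_div_distrib]
  generalize (∏ i ∈ range (2^k-1), (2*(m:ℝ) - i)) = P2 at hP2 hkeyR ⊢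
  field_simp
  linear_combination hkeyR

lemma fact_lim (c : ℝ) :
    Tendsto (fun m : ℕ => ((m:ℝ) - c) / (2*(m:ℝ) - c)) atTop (𝓝 (1/2)) := by
  have hx : Tendsto (fun x : ℝ => (x - c) / (2*x - c)) atTop (𝓝 (1/2)) := by
    have h0 : Tendsto (fun x : ℝ => c / x) atTop (𝓝 0) :=
      tendsto_const_nhds.div_atTop tendsto_id
    have h1 : Tendsto (fun x : ℝ => (1 - c/x) / (2 - c/x)) atTop (𝓝 ((1-0) / (2-0))) :=
      ((tendsto_const_nhds.sub h0)).div ((tendsto_const_nhds.sub h0)) (by norm_num)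
    rw [show ((1:ℝ)-0)/(2-0) = 1/2 by norm_num] at h1
    refine h1.congr' ?_
    filter_upwards [eventually_gt_atTop (max 1 |c|)] with x hx
    have hx0 : (0:ℝ) < x := lt_of_lt_of_le (by norm_num) (le_of_lt (lt_of_le_of_lt (le_max_left 1 |c|) hx))
    have hcx : |c| < x := lt_of_le_of_lt (le_max_right 1 |c|) hx
    have hc1 : c < x := lt_of_le_of_lt (le_abs_self c) hcx
    have hc2 : -x < c := neg_lt_of_abs_lt hcx
    have hden : (0:ℝ) < 2*x - c := by linarith
    have hden2 : (0:ℝ) < 2 - c/x := by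
      rw [sub_pos, div_lt_iff₀ hx0]; linarith
    rw [div_eq_div_iff hden2.ne' hden.ne']
    field_simp
  exact hx.comp tendsto_natCast_atTop_atTop

lemma prod_lim (j : ℕ) :
    Tendsto (fun m : ℕ => ∏ i ∈ range j, (((m:ℝ) - i) / (2*(m:ℝ) - i))) atTop
      (𝓝 ((1/2 : ℝ)^j)) := by
  have := tendsto_finset_prod (range j) (fun i (_ : i ∈ range j) => fact_lim (i : ℝ))
  simpa [prod_const] using this

/-- for rooted binary plane trees, with n = 2m+1 nodes, the ratio
B_n^{(k)}/B_n = [(2^k/(2m−2^k+2))·binom(2m−2^k+2, m−2^k+1)] / C_m of the number of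
binary trees with distance to the border ≥ k to the total number of binary trees
tends to 2^{k−2^k+1} as m → ∞. -/
theorem stmt_19 (k : ℕ) :
    Tendsto (fun m : ℕ =>
        (((2 ^ k : ℝ) / ((2 * m + 2 - 2 ^ k : ℕ) : ℝ)) *
            ((2 * m + 2 - 2 ^ k).choose (m + 1 - 2 ^ k) : ℝ)) /
          (catalan m : ℝ))
      atTop (𝓝 ((2 : ℝ) ^ ((k : ℤ) - 2 ^ k + 1))) := by
  have h1 : (1:ℕ) ≤ 2^k := Nat.one_le_two_pow
  have hlim : Tendsto (fun m : ℕ => (2:ℝ)^k * ∏ i ∈ range (2^k - 1), (((m:ℝ) - i) / (2*(m:ℝ) - i)))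
      atTop (𝓝 ((2:ℝ)^k * (1/2 : ℝ)^(2^k - 1))) :=
    (prod_lim (2^k - 1)).const_mul _
  have heq : (2:ℝ)^k * (1/2 : ℝ)^(2^k - 1) = (2 : ℝ) ^ ((k : ℤ) - 2 ^ k + 1) := by
    rw [one_div, inv_pow, ← zpow_natCast (2:ℝ) k, ← zpow_natCast (2:ℝ) (2^k-1), ← zpow_neg,
      ← zpow_add₀ (by norm_num : (2:ℝ) ≠ 0)]
    congr 1
    have : ((2^k - 1 : ℕ) : ℤ) = 2^k - 1 := by
      push_cast [Nat.cast_sub h1]; ring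
    rw [this]; ring
  rw [← heq]
  refine hlim.congr' ?_
  filter_upwards [eventually_ge_atTop (2^k)] with m hm
  exact (eq_event k m hm).symm
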